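/- Let U be an open set in ℝⁿ and F = (F₁,…,Fₙ) a vector field on U that is continuous on U and differentiable at every point of U, and suppose the function div F = Σᵢ DᵢFᵢ is Lebesgue integrable on U. Then for every closed axis-parallel box Q ⊂ U, the flux of F through ∂Q with outward normal equals ∫_Q (D₁F₁ + ⋯ + DₙFₙ)(x) dx; that is, Σⱼ ( ∫_{face xⱼ = bⱼ} Fⱼ dm_{n−1} − ∫_{face xⱼ = aⱼ} Fⱼ dm_{n−1} ) = ∫_Q Σᵢ (∂Fᵢ/∂xᵢ)(x) dx. -/

import Mathlib

open MeasureTheory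

/-- The flux of a vector field `F` through the boundary of the closed axis-parallel box
`∏ⱼ [aⱼ, bⱼ] ⊆ ℝⁿ⁺¹` oriented with the outward normal: the sum over the `n+1` pairs of
opposite faces of the integral of the corresponding component of `F` over the top face
(`xⱼ = bⱼ`) minus that over the bottom face (`xⱼ = aⱼ`), each face integral being taken
with respect to `n`-dimensional Lebesgue measure. -/
noncomputable def boxFlux {n : ℕ} (F : (Fin (n + 1) → ℝ) → (Fin (n + 1) → ℝ))
    (a b : Fin (n + 1) → ℝ) : ℝ :=
  ∑ j : Fin (n + 1),
    ((∫ x in Set.Icc (a ∘ j.succAbove) (b ∘ j.succAbove), F (j.insertNth (b j) x) j) -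
     (∫ x in Set.Icc (a ∘ j.succAbove) (b ∘ j.succAbove), F (j.insertNth (a j) x) j))

/-- **Divergence theorem for boxes.** Let `F` be a vector field on an open set
`U ⊆ ℝⁿ⁺¹`, continuous on `U` and differentiable at every point of `U`, with
`div F = Σᵢ DᵢFᵢ` Lebesgue integrable on `U`. Then the flux of `F` through the
boundary of every closed axis-parallel box `Q ⊆ U`, oriented with the outward normal,
equals `∫_Q div F`. -/
theorem boxFlux_eq_integral_divergence {n : ℕ}
    (U : Set (Fin (n + 1) → ℝ)) (hU : IsOpen U)
    (F : (Fin (n + 1) → ℝ) → (Fin (n + 1) → ℝ))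
    (F' : (Fin (n + 1) → ℝ) → ((Fin (n + 1) → ℝ) →L[ℝ] (Fin (n + 1) → ℝ)))
    (hFc : ContinuousOn F U)
    (hFd : ∀ x ∈ U, HasFDerivAt F (F' x) x)
    (hdiv : IntegrableOn (fun x => ∑ i, F' x (Pi.single i 1) i) U volume)
    (a b : Fin (n + 1) → ℝ) (hab : ∀ i, a i < b i) (hQ : Set.Icc a b ⊆ U) :
    boxFlux F a b = ∫ x in Set.Icc a b, ∑ i, F' x (Pi.single i 1) i := by
  rw [boxFlux]
  exact (MeasureTheory.integral_divergence_of_hasFDerivAt_off_countable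
    a b (fun i => (hab i).le) F F' ∅ Set.countable_empty (hFc.mono hQ)
    (fun x hx => hFd x (hQ ⟨fun i => (hx.1 i trivial).1.le, fun i => (hx.1 i trivial).2.le⟩))
    (hdiv.mono_set hQ)).symm
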